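/- Let η > 0 and let μ, μ_k be vectors in ℝ^m (EuclideanSpace ℝ (Fin m)) with ‖μ_k‖ ≥ (‖μ‖ + √(‖μ‖² + η(2+η))) / (2+η). Then (1 − ‖μ‖²) + ‖μ − μ_k‖² ≥ (1+η)(1 − ‖μ_k‖²); equivalently, writing tr(Σ) = 1 − ‖μ‖² and tr(Σ_k) = 1 − ‖μ_k‖², one has tr(Σ) + ‖μ − μ_k‖² ≥ (1+η)·tr(Σ_k). -/

import Mathlib

/-- For `η > 0` and vectors `μ, μ_k` in `ℝ^m` with
`‖μ_k‖ ≥ (‖μ‖ + √(‖μ‖² + η(2+η))) / (2+η)`, one has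
`(1 - ‖μ‖²) + ‖μ - μ_k‖² ≥ (1+η)(1 - ‖μ_k‖²)`. -/
theorem stmt_7 (m : ℕ) (η : ℝ) (hη : 0 < η) (μ μk : EuclideanSpace ℝ (Fin m))
    (h : (‖μ‖ + Real.sqrt (‖μ‖ ^ 2 + η * (2 + η))) / (2 + η) ≤ ‖μk‖) :
    (1 + η) * (1 - ‖μk‖ ^ 2) ≤ (1 - ‖μ‖ ^ 2) + ‖μ - μk‖ ^ 2 := by
  have h2 : (0:ℝ) < 2 + η := by linarith
  have hs : Real.sqrt (‖μ‖ ^ 2 + η * (2 + η)) ≤ (2 + η) * ‖μk‖ - ‖μ‖ := by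
    have := (div_le_iff₀ h2).mp h
    linarith
  have hs0 : (0:ℝ) ≤ (2 + η) * ‖μk‖ - ‖μ‖ :=
    le_trans (Real.sqrt_nonneg _) hs
  have hsq : ‖μ‖ ^ 2 + η * (2 + η) ≤ ((2 + η) * ‖μk‖ - ‖μ‖) ^ 2 := by
    have := Real.sq_sqrt (by positivity : (0:ℝ) ≤ ‖μ‖ ^ 2 + η * (2 + η))
    nlinarith [pow_le_pow_left₀ (Real.sqrt_nonneg _) hs 2]
  have hkey : η ≤ (2 + η) * ‖μk‖ ^ 2 - 2 * ‖μ‖ * ‖μk‖ := by nlinarith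
  have hnorm : ‖μ - μk‖ ^ 2 = ‖μ‖ ^ 2 - 2 * inner ℝ μ μk + ‖μk‖ ^ 2 := by
    rw [norm_sub_sq_real]
  have hcs : (inner ℝ μ μk : ℝ) ≤ ‖μ‖ * ‖μk‖ := real_inner_le_norm μ μk
  nlinarith
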